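/- Equivalently ordered representations: for pairs of distributions (P,Q) and (P',Q') with tradeoff functions τ, τ' and hockey-stick curves h, h', the pointwise inequality τ ≥ τ' holds (τ dominates τ' pointwise on [0,1]) if and only if h ≤ h' pointwise on (0,∞). -/

import Mathlib

open MeasureTheory Filter Set
open scoped ENNReal NNReal

/-- Hockey-stick divergence `H_x(P‖Q) = sup_E P(E) - x Q(E)` over measurable events. -/
noncomputable def hsDiv {Ω : Type*} [MeasurableSpace Ω] (x : ℝ) (P Q : Measure Ω) : ℝ :=
  ⨆ E : {E : Set Ω // MeasurableSet E}, ((P E).toReal - x * (Q E).toReal)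

/-- Tradeoff function `T_α(P‖Q)`: the infimum of Type II errors `1 - ∫ φ dQ` over
measurable randomized tests `φ : Ω → [0,1]` with Type I error `∫ φ dP ≤ α`. -/
noncomputable def tradeoff {Ω : Type*} [MeasurableSpace Ω] (P Q : Measure Ω) (α : ℝ) : ℝ :=
  sInf {β : ℝ | ∃ φ : Ω → ℝ, Measurable φ ∧ (∀ ω, φ ω ∈ Set.Icc (0 : ℝ) 1) ∧
    (∫ ω, φ ω ∂P) ≤ α ∧ β = 1 - ∫ ω, φ ω ∂Q}

set_option linter.unusedSectionVars false
open scoped Topology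

section Basic
variable {Ω : Type*} [MeasurableSpace Ω] (P Q : Measure Ω)
  [IsProbabilityMeasure P] [IsProbabilityMeasure Q]

lemma test_integrable {φ : Ω → ℝ} (hφm : Measurable φ) (hφ : ∀ ω, φ ω ∈ Set.Icc (0:ℝ) 1) :
    Integrable φ P := by
  refine Integrable.mono' (integrable_const 1) hφm.aestronglyMeasurable ?_
  refine Eventually.of_forall fun ω => ?_
  rw [Real.norm_eq_abs, abs_of_nonneg (hφ ω).1]
  exact (hφ ω).2

lemma test_integral_mem {φ : Ω → ℝ} (hφm : Measurable φ) (hφ : ∀ ω, φ ω ∈ Set.Icc (0:ℝ) 1) :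
    (∫ ω, φ ω ∂P) ∈ Set.Icc (0:ℝ) 1 := by
  constructor
  · exact integral_nonneg fun ω => (hφ ω).1
  · calc (∫ ω, φ ω ∂P) ≤ ∫ _, (1:ℝ) ∂P :=
          integral_mono (test_integrable P hφm hφ) (integrable_const 1) fun ω => (hφ ω).2
    _ = 1 := by simp

lemma tradeoff_nonempty {α : ℝ} (hα : 0 ≤ α) :
    {β : ℝ | ∃ φ : Ω → ℝ, Measurable φ ∧ (∀ ω, φ ω ∈ Set.Icc (0 : ℝ) 1) ∧
      (∫ ω, φ ω ∂P) ≤ α ∧ β = 1 - ∫ ω, φ ω ∂Q}.Nonempty := by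
  refine ⟨1, fun _ => 0, measurable_const, fun ω => by simp, by simpa using hα, by simp⟩

lemma tradeoff_bddBelow (α : ℝ) :
    BddBelow {β : ℝ | ∃ φ : Ω → ℝ, Measurable φ ∧ (∀ ω, φ ω ∈ Set.Icc (0 : ℝ) 1) ∧
      (∫ ω, φ ω ∂P) ≤ α ∧ β = 1 - ∫ ω, φ ω ∂Q} := by
  refine ⟨0, fun β hβ => ?_⟩
  obtain ⟨φ, hφm, hφ, -, rfl⟩ := hβ
  have := (test_integral_mem Q hφm hφ).2
  linarith

lemma tradeoff_le {α : ℝ} {φ : Ω → ℝ} (hφm : Measurable φ) (hφ : ∀ ω, φ ω ∈ Set.Icc (0:ℝ) 1)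
    (hP : (∫ ω, φ ω ∂P) ≤ α) : tradeoff P Q α ≤ 1 - ∫ ω, φ ω ∂Q :=
  csInf_le (tradeoff_bddBelow P Q α) ⟨φ, hφm, hφ, hP, rfl⟩

lemma tradeoff_nonneg {α : ℝ} (hα : 0 ≤ α) : 0 ≤ tradeoff P Q α := by
  refine le_csInf (tradeoff_nonempty P Q hα) fun β hβ => ?_
  obtain ⟨φ, hφm, hφ, -, rfl⟩ := hβ
  have := (test_integral_mem Q hφm hφ).2
  linarith

lemma tradeoff_antitone {a b : ℝ} (ha : 0 ≤ a) (hab : a ≤ b) :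
    tradeoff P Q b ≤ tradeoff P Q a := by
  refine csInf_le_csInf (tradeoff_bddBelow P Q b) (tradeoff_nonempty P Q ha) ?_
  rintro β ⟨φ, hφm, hφ, hP, rfl⟩
  exact ⟨φ, hφm, hφ, hP.trans hab, rfl⟩

lemma tradeoff_one : tradeoff P Q 1 = 0 := by
  refine le_antisymm ?_ (tradeoff_nonneg P Q zero_le_one)
  have h := tradeoff_le P Q (α := 1) (φ := fun _ => 1) measurable_const (fun ω => by simp)
    (by simp)
  simpa using h

lemma hsDiv_bddAbove {x : ℝ} (hx : 0 ≤ x) :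
    BddAbove (Set.range fun E : {E : Set Ω // MeasurableSet E} =>
      ((P E).toReal - x * (Q E).toReal)) := by
  refine ⟨1, ?_⟩
  rintro r ⟨E, rfl⟩
  have h1 : (P E).toReal ≤ 1 := by
    have := prob_le_one (μ := P) (s := E)
    simpa using ENNReal.toReal_mono ENNReal.one_ne_top this
  have h2 : 0 ≤ x * (Q E).toReal := mul_nonneg hx ENNReal.toReal_nonneg
  simp only
  linarith

lemma event_le_hsDiv {x : ℝ} (hx : 0 ≤ x) {E : Set Ω} (hE : MeasurableSet E) :
    (P E).toReal - x * (Q E).toReal ≤ hsDiv x P Q :=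
  le_ciSup (hsDiv_bddAbove P Q hx) (⟨E, hE⟩ : {E : Set Ω // MeasurableSet E})

lemma test_le_hsDiv {x : ℝ} (hx : 0 ≤ x) {ψ : Ω → ℝ} (hψm : Measurable ψ)
    (hψ : ∀ ω, ψ ω ∈ Set.Icc (0:ℝ) 1) :
    (∫ ω, ψ ω ∂P) - x * ∫ ω, ψ ω ∂Q ≤ hsDiv x P Q := by
  have hnn : 0 ≤ᵐ[P] ψ := Eventually.of_forall fun ω => (hψ ω).1
  have hbd : ψ ≤ᵐ[P] fun _ => (1:ℝ) := Eventually.of_forall fun ω => (hψ ω).2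
  have hiP : (∫ ω, ψ ω ∂P) = ∫ t in Set.Ioc (0:ℝ) 1, (P {a | t ≤ ψ a}).toReal :=
    (test_integrable P hψm hψ).integral_eq_integral_Ioc_meas_le hnn hbd
  have hiQ : (∫ ω, ψ ω ∂Q) = ∫ t in Set.Ioc (0:ℝ) 1, (Q {a | t ≤ ψ a}).toReal :=
    (test_integrable Q hψm hψ).integral_eq_integral_Ioc_meas_le
      (Eventually.of_forall fun ω => (hψ ω).1) (Eventually.of_forall fun ω => (hψ ω).2)
  have hmeasP : Measurable fun t : ℝ => (P {a | t ≤ ψ a}).toReal :=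
    Measurable.ennreal_toReal <| Antitone.measurable fun s t hst =>
      measure_mono fun a ha => le_trans hst ha
  have hmeasQ : Measurable fun t : ℝ => (Q {a | t ≤ ψ a}).toReal :=
    Measurable.ennreal_toReal <| Antitone.measurable fun s t hst =>
      measure_mono fun a ha => le_trans hst ha
  have hintP : IntegrableOn (fun t : ℝ => (P {a | t ≤ ψ a}).toReal) (Set.Ioc 0 1) := by
    refine Integrable.mono' (g := fun _ => (1:ℝ)) (integrableOn_const (by simp))
      hmeasP.aestronglyMeasurable (Eventually.of_forall fun t => ?_)
    rw [Real.norm_eq_abs, abs_of_nonneg ENNReal.toReal_nonneg]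
    simpa using ENNReal.toReal_mono ENNReal.one_ne_top (prob_le_one (μ := P))
  have hintQ : IntegrableOn (fun t : ℝ => (Q {a | t ≤ ψ a}).toReal) (Set.Ioc 0 1) := by
    refine Integrable.mono' (g := fun _ => (1:ℝ)) (integrableOn_const (by simp))
      hmeasQ.aestronglyMeasurable (Eventually.of_forall fun t => ?_)
    rw [Real.norm_eq_abs, abs_of_nonneg ENNReal.toReal_nonneg]
    simpa using ENNReal.toReal_mono ENNReal.one_ne_top (prob_le_one (μ := Q))
  rw [hiP, hiQ, ← integral_const_mul, ← integral_sub hintP (hintQ.const_mul x)]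
  calc (∫ t in Set.Ioc (0:ℝ) 1, ((P {a | t ≤ ψ a}).toReal - x * (Q {a | t ≤ ψ a}).toReal))
      ≤ ∫ _ in Set.Ioc (0:ℝ) 1, hsDiv x P Q := by
        refine setIntegral_mono_on (hintP.sub (hintQ.const_mul x))
          (integrableOn_const (by simp)) measurableSet_Ioc fun t _ => ?_
        exact event_le_hsDiv P Q hx (hψm measurableSet_Ici)
    _ = hsDiv x P Q := by simp

lemma tradeoff_exists_test {α ε : ℝ} (hα : 0 ≤ α) (hε : 0 < ε) :
    ∃ φ : Ω → ℝ, Measurable φ ∧ (∀ ω, φ ω ∈ Set.Icc (0:ℝ) 1) ∧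
      (∫ ω, φ ω ∂P) ≤ α ∧ 1 - (∫ ω, φ ω ∂Q) < tradeoff P Q α + ε := by
  obtain ⟨β, hβmem, hβlt⟩ := exists_lt_of_csInf_lt (tradeoff_nonempty P Q hα)
    (lt_add_of_pos_right (tradeoff P Q α) hε)
  obtain ⟨φ, hφm, hφ, hP, rfl⟩ := hβmem
  exact ⟨φ, hφm, hφ, hP, hβlt⟩

lemma tradeoff_convex_comb {a b l m : ℝ} (ha : 0 ≤ a) (hb : 0 ≤ b)
    (hl : 0 ≤ l) (hm : 0 ≤ m) (hlm : l + m = 1) :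
    tradeoff P Q (l * a + m * b) ≤ l * tradeoff P Q a + m * tradeoff P Q b := by
  refine le_of_forall_pos_le_add fun ε hε => ?_
  obtain ⟨φ₁, hφ₁m, hφ₁, hP₁, hQ₁⟩ := tradeoff_exists_test P Q ha hε
  obtain ⟨φ₂, hφ₂m, hφ₂, hP₂, hQ₂⟩ := tradeoff_exists_test P Q hb hε
  set φ : Ω → ℝ := fun ω => l * φ₁ ω + m * φ₂ ω with hφdef
  have hφm : Measurable φ := ((hφ₁m.const_mul l).add (hφ₂m.const_mul m))
  have hφmem : ∀ ω, φ ω ∈ Set.Icc (0:ℝ) 1 := by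
    intro ω
    obtain ⟨h1, h2⟩ := hφ₁ ω; obtain ⟨h3, h4⟩ := hφ₂ ω
    constructor
    · positivity
    · simp only [hφdef]
      nlinarith
  have hint₁P := test_integrable P hφ₁m hφ₁
  have hint₂P := test_integrable P hφ₂m hφ₂
  have hint₁Q := test_integrable Q hφ₁m hφ₁
  have hint₂Q := test_integrable Q hφ₂m hφ₂
  have hiP : (∫ ω, φ ω ∂P) = l * (∫ ω, φ₁ ω ∂P) + m * (∫ ω, φ₂ ω ∂P) := by
    rw [hφdef]
    rw [integral_add (hint₁P.const_mul l) (hint₂P.const_mul m), integral_const_mul,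
      integral_const_mul]
  have hiQ : (∫ ω, φ ω ∂Q) = l * (∫ ω, φ₁ ω ∂Q) + m * (∫ ω, φ₂ ω ∂Q) := by
    rw [hφdef]
    rw [integral_add (hint₁Q.const_mul l) (hint₂Q.const_mul m), integral_const_mul,
      integral_const_mul]
  have hfeas : (∫ ω, φ ω ∂P) ≤ l * a + m * b := by
    rw [hiP]
    gcongr
  have hle := tradeoff_le P Q hφm hφmem hfeas
  have : 1 - (∫ ω, φ ω ∂Q) = l * (1 - ∫ ω, φ₁ ω ∂Q) + m * (1 - ∫ ω, φ₂ ω ∂Q) := by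
    rw [hiQ]; ring_nf; linarith [hlm]
  rw [this] at hle
  have h1 : l * (1 - ∫ ω, φ₁ ω ∂Q) ≤ l * (tradeoff P Q a + ε) :=
    mul_le_mul_of_nonneg_left hQ₁.le hl
  have h2 : m * (1 - ∫ ω, φ₂ ω ∂Q) ≤ m * (tradeoff P Q b + ε) :=
    mul_le_mul_of_nonneg_left hQ₂.le hm
  nlinarith [hle]

/-- L2a: `hsDiv x P Q ≥ 1 - α - x * tradeoff P Q α`. -/
lemma one_sub_le_hsDiv {x α : ℝ} (hx : 0 ≤ x) (hα : α ∈ Set.Icc (0:ℝ) 1) :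
    1 - α - x * tradeoff P Q α ≤ hsDiv x P Q := by
  refine le_of_forall_pos_le_add fun ε hε => ?_
  have hε' : 0 < ε / (x + 1) := div_pos hε (by linarith)
  obtain ⟨φ, hφm, hφ, hP, hQ⟩ := tradeoff_exists_test P Q hα.1 hε'
  set ψ : Ω → ℝ := fun ω => 1 - φ ω with hψdef
  have hψm : Measurable ψ := measurable_const.sub hφm
  have hψmem : ∀ ω, ψ ω ∈ Set.Icc (0:ℝ) 1 := fun ω => by
    obtain ⟨h1, h2⟩ := hφ ω
    exact ⟨by simp [hψdef]; linarith, by simp [hψdef]; linarith⟩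
  have hkey := test_le_hsDiv P Q hx hψm hψmem
  have hiP : (∫ ω, ψ ω ∂P) = 1 - ∫ ω, φ ω ∂P := by
    rw [hψdef, integral_sub (integrable_const 1) (test_integrable P hφm hφ)]
    simp
  have hiQ : (∫ ω, ψ ω ∂Q) = 1 - ∫ ω, φ ω ∂Q := by
    rw [hψdef, integral_sub (integrable_const 1) (test_integrable Q hφm hφ)]
    simp
  rw [hiP, hiQ] at hkey
  have h1 : 1 - (∫ ω, φ ω ∂P) ≥ 1 - α := by linarith
  have h2 : x * (1 - ∫ ω, φ ω ∂Q) ≤ x * (tradeoff P Q α + ε / (x + 1)) :=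
    mul_le_mul_of_nonneg_left hQ.le hx
  have h3 : x * (ε / (x + 1)) ≤ ε := by
    rw [mul_div_assoc']
    rw [div_le_iff₀ (by linarith : (0:ℝ) < x + 1)]
    nlinarith
  nlinarith [hkey]

/-- L2b: for every event, `P E - x Q E ≤ 1 - α_E - x τ(α_E)` with `α_E = P Eᶜ`. -/
lemma event_le_one_sub {x : ℝ} (hx : 0 ≤ x) {E : Set Ω} (hE : MeasurableSet E) :
    (P E).toReal - x * (Q E).toReal ≤
      1 - (P Eᶜ).toReal - x * tradeoff P Q ((P Eᶜ).toReal) := by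
  have hPc : (P E).toReal = 1 - (P Eᶜ).toReal := by
    have := prob_compl_eq_one_sub (μ := P) hE.compl
    rw [compl_compl] at this
    rw [this, ENNReal.toReal_sub_of_le prob_le_one ENNReal.one_ne_top]
    simp
  have hQc : (Q E).toReal = 1 - (Q Eᶜ).toReal := by
    have := prob_compl_eq_one_sub (μ := Q) hE.compl
    rw [compl_compl] at this
    rw [this, ENNReal.toReal_sub_of_le prob_le_one ENNReal.one_ne_top]
    simp
  have hτ : tradeoff P Q ((P Eᶜ).toReal) ≤ (Q E).toReal := by
    have hiI : ∀ μ : Measure Ω, (∫ ω, Eᶜ.indicator (fun _ => (1:ℝ)) ω ∂μ) = (μ Eᶜ).toReal := by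
      intro μ
      rw [integral_indicator_const _ hE.compl]
      simp [mul_comm]
      rfl
    have h := tradeoff_le P Q (α := (P Eᶜ).toReal) (φ := Eᶜ.indicator (fun _ => 1))
      (measurable_const.indicator hE.compl)
      (fun ω => by by_cases h : ω ∈ Eᶜ <;> simp [Set.indicator_apply, h])
      (le_of_eq (hiI P))
    rw [hiI Q] at h
    rw [hQc]; linarith
  have := mul_le_mul_of_nonneg_left hτ hx
  linarith [hPc]

/-- Continuity of the tradeoff function at `0`. -/
lemma tradeoff_cont_at_zero {ε : ℝ} (hε : 0 < ε) :
    ∃ u : ℝ, 0 < u ∧ ∀ α ∈ Set.Icc (0:ℝ) u, tradeoff P Q 0 - ε ≤ tradeoff P Q α := by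
  obtain ⟨S, hSm, hS1, hS2⟩ := Measure.mutuallySingular_singularPart Q P
  set f : Ω → ℝ≥0∞ := Q.rnDeriv P with hfdef
  have hfm : Measurable f := Measure.measurable_rnDeriv Q P
  have hdec : Q = Q.singularPart P + P.withDensity f := Q.haveLebesgueDecomposition_add P
  -- tail integrals tend to zero
  have hflt : ∫⁻ a, f a ∂P ≠ ∞ := (Measure.lintegral_rnDeriv_lt_top Q P).ne
  set F : ℕ → Ω → ℝ≥0∞ := fun n a => if (n : ℝ≥0∞) < f a then f a else 0 with hFdef
  have hFmeas : ∀ n, Measurable (F n) := by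
    intro n
    exact Measurable.ite (measurableSet_lt measurable_const hfm) hfm measurable_const
  have hFle : ∀ n, F n ≤ f := by
    intro n a; by_cases h : (n : ℝ≥0∞) < f a <;> simp [hFdef, h]
  have htend : Tendsto (fun n => ∫⁻ a, F n a ∂P) atTop (𝓝 (∫⁻ a, (0:ℝ≥0∞) ∂P)) := by
    refine tendsto_lintegral_of_dominated_convergence f hFmeas
      (fun n => Eventually.of_forall (hFle n)) hflt ?_
    have hae : ∀ᵐ a ∂P, f a < ∞ := Measure.rnDeriv_lt_top Q P
    filter_upwards [hae] with a ha
    obtain ⟨n₀, hn₀⟩ := exists_nat_gt (f a).toReal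
    have hev : ∀ n ≥ n₀, F n a = 0 := by
      intro n hn
      have : f a ≤ (n : ℝ≥0∞) := by
        calc f a = ENNReal.ofReal (f a).toReal := (ENNReal.ofReal_toReal ha.ne).symm
        _ ≤ (n₀ : ℝ≥0∞) := by
            rw [← ENNReal.ofReal_natCast]
            exact ENNReal.ofReal_le_ofReal hn₀.le
        _ ≤ (n : ℝ≥0∞) := by exact_mod_cast Nat.cast_le.mpr hn
      simp [hFdef, not_lt.mpr this]
    exact tendsto_atTop_of_eventually_const hev
  rw [lintegral_zero] at htend
  have hεE : (0:ℝ≥0∞) < ENNReal.ofReal (ε / 2) := by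
    simp [ENNReal.ofReal_pos]; linarith
  obtain ⟨n, hn⟩ := (htend.eventually_lt_const hεE).exists
  refine ⟨ε / (2 * (n + 1)), by positivity, fun α hα => ?_⟩
  have hα0 : (0:ℝ) ≤ α := hα.1
  refine le_csInf (tradeoff_nonempty P Q hα0) ?_
  rintro β ⟨φ, hφm, hφ, hPα, rfl⟩
  set g : Ω → ℝ≥0∞ := fun a => ENNReal.ofReal (φ a) with hgdef
  have hgm : Measurable g := hφm.ennreal_ofReal
  have hg1 : ∀ a, g a ≤ 1 := fun a => ENNReal.ofReal_le_one.mpr (hφ a).2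
  have hQint : (∫ ω, φ ω ∂Q) = (∫⁻ a, g a ∂Q).toReal :=
    integral_eq_lintegral_of_nonneg_ae (Eventually.of_forall fun ω => (hφ ω).1)
      hφm.aestronglyMeasurable
  have hPint : (∫ ω, φ ω ∂P) = (∫⁻ a, g a ∂P).toReal :=
    integral_eq_lintegral_of_nonneg_ae (Eventually.of_forall fun ω => (hφ ω).1)
      hφm.aestronglyMeasurable
  set A := ∫⁻ a, g a ∂P with hAdef
  have hA1 : A ≤ 1 := by
    calc A ≤ ∫⁻ _, 1 ∂P := lintegral_mono hg1
    _ = 1 := by simp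
  have hAne : A ≠ ∞ := (lt_of_le_of_lt hA1 ENNReal.one_lt_top).ne
  have hQle : ∫⁻ a, g a ∂Q ≤ Q Sᶜ + (n : ℝ≥0∞) * A + ENNReal.ofReal (ε/2) := by
    conv_lhs => rw [hdec]
    rw [lintegral_add_measure]
    have h1 : ∫⁻ a, g a ∂(Q.singularPart P) ≤ Q Sᶜ := by
      calc ∫⁻ a, g a ∂(Q.singularPart P) ≤ ∫⁻ _, 1 ∂(Q.singularPart P) := lintegral_mono hg1
      _ = Q.singularPart P Set.univ := by simp
      _ = Q.singularPart P Sᶜ := by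
          rw [← measure_add_measure_compl hSm, hS1, zero_add]
      _ ≤ Q Sᶜ := by
          conv_rhs => rw [hdec]
          simp only [Measure.add_apply]
          exact le_self_add
    have h2 : ∫⁻ a, g a ∂(P.withDensity f) ≤ (n : ℝ≥0∞) * A + ENNReal.ofReal (ε/2) := by
      rw [lintegral_withDensity_eq_lintegral_mul P hfm hgm]
      have hdom : ∀ a, (f * g) a ≤ (n : ℝ≥0∞) * g a + F n a := by
        intro a
        simp only [Pi.mul_apply]
        by_cases h : (n:ℝ≥0∞) < f a
        · have hF : F n a = f a := if_pos h
          calc f a * g a ≤ f a * 1 := mul_le_mul_right (hg1 a) _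
          _ = f a := mul_one _
          _ ≤ _ := by rw [hF]; exact le_add_self
        · calc f a * g a ≤ (n:ℝ≥0∞) * g a := mul_le_mul_left (not_lt.mp h) _
          _ ≤ _ := le_self_add
      calc ∫⁻ a, (f * g) a ∂P ≤ ∫⁻ a, ((n:ℝ≥0∞) * g a + F n a) ∂P := lintegral_mono hdom
      _ = (n:ℝ≥0∞) * A + ∫⁻ a, F n a ∂P := by
          rw [lintegral_add_left (hgm.const_mul _), lintegral_const_mul _ hgm]
      _ ≤ (n:ℝ≥0∞) * A + ENNReal.ofReal (ε/2) := add_le_add_right hn.le _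
    calc ∫⁻ a, g a ∂(Q.singularPart P) + ∫⁻ a, g a ∂(P.withDensity f)
        ≤ Q Sᶜ + ((n : ℝ≥0∞) * A + ENNReal.ofReal (ε/2)) := add_le_add h1 h2
    _ = _ := by rw [add_assoc]
  have hnA : ((n : ℝ≥0∞) * A).toReal ≤ (n:ℝ) * α := by
    rw [ENNReal.toReal_mul]
    simp only [ENNReal.toReal_natCast]
    have : A.toReal ≤ α := by rw [← hPint]; exact hPα
    exact mul_le_mul_of_nonneg_left this (Nat.cast_nonneg n)
  have hfin : Q Sᶜ + (n:ℝ≥0∞) * A + ENNReal.ofReal (ε/2) ≠ ∞ := by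
    refine ENNReal.add_ne_top.mpr ⟨ENNReal.add_ne_top.mpr ⟨measure_ne_top _ _, ?_⟩,
      ENNReal.ofReal_ne_top⟩
    exact ENNReal.mul_ne_top (by simp) hAne
  have hQR : (∫ ω, φ ω ∂Q) ≤ (Q Sᶜ).toReal + (n:ℝ) * α + ε/2 := by
    rw [hQint]
    refine le_trans (ENNReal.toReal_mono hfin hQle) ?_
    rw [ENNReal.toReal_add (ENNReal.add_ne_top.mpr ⟨measure_ne_top _ _,
        ENNReal.mul_ne_top (by simp) hAne⟩) ENNReal.ofReal_ne_top,
      ENNReal.toReal_add (measure_ne_top _ _) (ENNReal.mul_ne_top (by simp) hAne),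
      ENNReal.toReal_ofReal (by linarith : (0:ℝ) ≤ ε/2)]
    linarith [hnA]
  have hτ0 : tradeoff P Q 0 ≤ 1 - (Q Sᶜ).toReal := by
    have hiI : ∀ μ : Measure Ω, (∫ ω, Sᶜ.indicator (fun _ => (1:ℝ)) ω ∂μ) = (μ Sᶜ).toReal := by
      intro μ
      rw [integral_indicator_const _ hSm.compl]
      simp [mul_comm]
      rfl
    have h := tradeoff_le P Q (α := 0) (φ := Sᶜ.indicator (fun _ => 1))
      (measurable_const.indicator hSm.compl)
      (fun ω => by by_cases h : ω ∈ Sᶜ <;> simp [Set.indicator_apply, h])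
      (by rw [hiI P, hS2]; simp)
    rw [hiI Q] at h
    exact h
  have hnα : (n:ℝ) * α ≤ ε/2 := by
    have h1 : (n:ℝ) * α ≤ (n:ℝ) * (ε / (2 * (n + 1))) :=
      mul_le_mul_of_nonneg_left hα.2 (Nat.cast_nonneg n)
    have h2 : (n:ℝ) * (ε / (2 * (n + 1))) ≤ ε/2 := by
      rw [mul_div_assoc']
      rw [div_le_div_iff₀ (by positivity) (by norm_num)]
      have : (0:ℝ) ≤ (n:ℝ) := Nat.cast_nonneg n
      nlinarith
    linarith
  linarith

end Basic


lemma sep_line (f : ℝ → ℝ)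
    (hconv : ∀ a b l m : ℝ, a ∈ Set.Icc (0:ℝ) 1 → b ∈ Set.Icc (0:ℝ) 1 → 0 ≤ l → 0 ≤ m →
      l + m = 1 → f (l*a + m*b) ≤ l * f a + m * f b)
    (hmono : ∀ a b : ℝ, 0 ≤ a → a ≤ b → b ≤ 1 → f b ≤ f a)
    (hnn : ∀ t ∈ Set.Icc (0:ℝ) 1, 0 ≤ f t)
    (hf1 : f 1 = 0)
    (hP0 : ∀ ε > (0:ℝ), ∃ u > (0:ℝ), ∀ t ∈ Set.Icc (0:ℝ) u, f 0 - ε ≤ f t)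
    {α c : ℝ} (hα : α ∈ Set.Icc (0:ℝ) 1) (hc0 : 0 ≤ c) (hc : c < f α) :
    ∃ s > (0:ℝ), ∃ γ > (0:ℝ), ∀ t ∈ Set.Icc (0:ℝ) 1, c + s * (α - t) + γ ≤ f t := by
  obtain ⟨δ, hδdef⟩ : ∃ δ : ℝ, δ = f α - c := ⟨_, rfl⟩
  have hδ : 0 < δ := by rw [hδdef]; linarith
  have hα1 : α < 1 := by
    rcases lt_or_eq_of_le hα.2 with h | h
    · exact h
    · exfalso; rw [h] at hc; rw [hf1] at hc; linarith
  rcases eq_or_lt_of_le hα.1 with h0 | hαpos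
  · -- α = 0
    obtain ⟨u, hu, hul⟩ := hP0 (δ/2) (by linarith)
    set u' : ℝ := min u 1 with hu'def
    have hu'0 : 0 < u' := lt_min hu one_pos
    have hu'1 : u' ≤ 1 := min_le_right _ _
    refine ⟨(c + δ/2) / u', by positivity, δ/4, by linarith, fun t ht => ?_⟩
    set s : ℝ := (c + δ/2) / u' with hsdef
    have hs : s * u' = c + δ/2 := div_mul_cancel₀ _ hu'0.ne'
    have hs0 : 0 ≤ s := by positivity
    rcases le_or_gt t u' with hcase | hcase
    · have hft : f 0 - δ/2 ≤ f t := hul t ⟨ht.1, hcase.trans (min_le_left u 1)⟩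
      have hf0 : f α ≤ f 0 := by rw [← h0]
      have hst : s * (α - t) ≤ 0 := by
        rw [← h0]
        have : 0 ≤ s * t := mul_nonneg hs0 ht.1
        linarith
      linarith
    · have hft : 0 ≤ f t := hnn t ht
      have : s * t ≥ s * u' := mul_le_mul_of_nonneg_left hcase.le hs0
      have hst : s * (α - t) ≤ -(c + δ/2) := by
        rw [← h0]; simp only [zero_sub, mul_neg]; linarith
      linarith
  · -- 0 < α < 1
    have hD : 0 ≤ f 0 - f α := by linarith [hmono 0 α le_rfl hα.1 hα.2]
    -- choose t_l ∈ [0, α) with f t_l - f α ≤ δ/4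
    obtain ⟨tl, htl0, htlα, he⟩ :
        ∃ tl, 0 ≤ tl ∧ tl < α ∧ f tl - f α ≤ δ/4 := by
      set D : ℝ := f 0 - f α with hDdef
      rcases le_or_gt D (δ/4) with hsmall | hbig
      · exact ⟨0, le_rfl, hαpos, hsmall⟩
      · set l : ℝ := δ/(4*D) with hldef
        have hD0 : 0 < D := by linarith
        have hl0 : 0 < l := by positivity
        have hl1 : l < 1 := by
          rw [hldef, div_lt_one (by positivity)]
          linarith
        refine ⟨(1 - l) * α, mul_nonneg (by linarith : (0:ℝ) ≤ 1 - l) hαpos.le, ?_, ?_⟩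
        · nlinarith
        · have harg : l * 0 + (1 - l) * α = (1 - l) * α := by ring
          have hkey := hconv 0 α l (1 - l) ⟨le_rfl, zero_le_one⟩ hα hl0.le (by linarith)
            (by ring)
          rw [harg] at hkey
          have hlD : l * D = δ/4 := by
            rw [hldef]; field_simp
          nlinarith
    have he0 : 0 ≤ f tl - f α := by linarith [hmono tl α htl0 htlα.le hα.2]
    obtain ⟨e, hedef⟩ : ∃ e : ℝ, e = f tl - f α := ⟨_, rfl⟩
    have hee : e ≤ δ/4 := by rw [hedef]; exact he
    have hee0 : 0 ≤ e := hedef ▸ he0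
    obtain ⟨s, hsdef⟩ : ∃ s : ℝ, s = e / (α - tl) := ⟨_, rfl⟩
    have hαtl : 0 < α - tl := by linarith
    have hs_e : s * (α - tl) = e := by rw [hsdef]; exact div_mul_cancel₀ _ hαtl.ne'
    have hs0 : 0 ≤ s := by rw [hsdef]; exact div_nonneg (hedef ▸ he0) hαtl.le
    -- s ≥ f α / (1 - α) > 0
    have hiv : f α * (1 - tl) ≤ (1 - α) * f tl := by
      have h1tl : (0:ℝ) < 1 - tl := by linarith
      have hl : (0:ℝ) ≤ (1 - α)/(1 - tl) := div_nonneg (by linarith) h1tl.le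
      have hm : (0:ℝ) ≤ (α - tl)/(1 - tl) := div_nonneg hαtl.le h1tl.le
      have hlm : (1 - α)/(1 - tl) + (α - tl)/(1 - tl) = 1 := by
        rw [← add_div, div_eq_one_iff_eq h1tl.ne']; ring
      have harg : (1 - α)/(1 - tl) * tl + (α - tl)/(1 - tl) * 1 = α := by
        rw [div_mul_eq_mul_div, div_mul_eq_mul_div, ← add_div,
          div_eq_iff h1tl.ne']; ring
      have hkey := hconv tl 1 _ _ ⟨htl0, by linarith⟩ ⟨zero_le_one, le_rfl⟩ hl hm hlm
      rw [harg, hf1] at hkey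
      rw [div_mul_eq_mul_div, mul_zero, add_zero, le_div_iff₀ h1tl] at hkey
      linarith [hkey]
    have hspos : 0 < s := by
      rcases eq_or_lt_of_le hs0 with h | h
      · exfalso
        have : e = 0 := by rw [← hs_e, ← h]; ring
        have : f tl = f α := by rw [hedef] at this; linarith
        nlinarith [hiv, hα1, hc0]
      · exact h
    refine ⟨s, hspos, 3*δ/4, by linarith, fun t ht => ?_⟩
    rcases le_or_gt t tl with hcase | hcase
    · -- t ≤ tl : use convexity at tl between t and α
      rcases eq_or_lt_of_le hcase with heq | hlt
      · -- t = tl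
        rw [heq]
        have : s * (α - tl) = e := hs_e
        nlinarith
      · have hαt : 0 < α - t := by linarith
        obtain ⟨l, hldef⟩ : ∃ l : ℝ, l = (α - tl)/(α - t) := ⟨_, rfl⟩
        obtain ⟨m, hmdef⟩ : ∃ m : ℝ, m = (tl - t)/(α - t) := ⟨_, rfl⟩
        have hl : 0 ≤ l := by
          rw [hldef]; apply div_nonneg _ hαt.le; linarith
        have hm : 0 ≤ m := by
          rw [hmdef]; apply div_nonneg _ hαt.le; linarith
        have hlm : l + m = 1 := by
          rw [hldef, hmdef, ← add_div, div_eq_one_iff_eq hαt.ne']; ring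
        have harg : l * t + m * α = tl := by
          rw [hldef, hmdef, div_mul_eq_mul_div, div_mul_eq_mul_div, ← add_div,
            div_eq_iff hαt.ne']; ring
        have hkey := hconv t α l m ht hα hl hm hlm
        rw [harg] at hkey
        have hkey2 : f tl * (α - t) ≤ (α - tl) * f t + (tl - t) * f α := by
          have := mul_le_mul_of_nonneg_right hkey hαt.le
          have hl2 : l * (α - t) = α - tl := by
            rw [hldef]; exact div_mul_cancel₀ _ hαt.ne'
          have hm2 : m * (α - t) = tl - t := by
            rw [hmdef]; exact div_mul_cancel₀ _ hαt.ne'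
          calc f tl * (α - t) ≤ (l * f t + m * f α) * (α - t) := this
          _ = (l * (α - t)) * f t + (m * (α - t)) * f α := by ring
          _ = (α - tl) * f t + (tl - t) * f α := by rw [hl2, hm2]
        -- conclude : f t ≥ f α + s*(α - t)
        have hse2 : s * (α - t) * (α - tl) = e * (α - t) := by
          calc s * (α - t) * (α - tl) = s * (α - tl) * (α - t) := by ring
          _ = e * (α - t) := by rw [hs_e]
        nlinarith [hkey2, hse2, hαtl, hαt]
    · rcases le_or_gt t α with hcase2 | hcase2
      · -- tl < t ≤ α
        have hft : f α ≤ f t := hmono t α ht.1 hcase2 hα.2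
        have hst : s * (α - t) ≤ e := by
          calc s * (α - t) ≤ s * (α - tl) := by
                apply mul_le_mul_of_nonneg_left _ hs0; linarith
          _ = e := hs_e
        nlinarith
      · -- α < t
        obtain ⟨l, hldef⟩ : ∃ l : ℝ, l = (t - α)/(t - tl) := ⟨_, rfl⟩
        obtain ⟨m, hmdef⟩ : ∃ m : ℝ, m = (α - tl)/(t - tl) := ⟨_, rfl⟩
        have httl : 0 < t - tl := by linarith
        have hl : 0 ≤ l := by
          rw [hldef]; apply div_nonneg _ httl.le; linarith
        have hm : 0 ≤ m := by
          rw [hmdef]; apply div_nonneg _ httl.le; linarith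
        have hlm : l + m = 1 := by
          rw [hldef, hmdef, ← add_div, div_eq_one_iff_eq httl.ne']; ring
        have harg : l * tl + m * t = α := by
          rw [hldef, hmdef, div_mul_eq_mul_div, div_mul_eq_mul_div, ← add_div,
            div_eq_iff httl.ne']; ring
        have hkey := hconv tl t l m ⟨htl0, by linarith [ht.2]⟩ ht hl hm hlm
        rw [harg] at hkey
        have hkey2 : f α * (t - tl) ≤ (t - α) * f tl + (α - tl) * f t := by
          have := mul_le_mul_of_nonneg_right hkey httl.le
          have hl2 : l * (t - tl) = t - α := by
            rw [hldef]; exact div_mul_cancel₀ _ httl.ne'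
          have hm2 : m * (t - tl) = α - tl := by
            rw [hmdef]; exact div_mul_cancel₀ _ httl.ne'
          calc f α * (t - tl) ≤ (l * f tl + m * f t) * (t - tl) := this
          _ = (l * (t - tl)) * f tl + (m * (t - tl)) * f t := by ring
          _ = (t - α) * f tl + (α - tl) * f t := by rw [hl2, hm2]
        have hse2 : s * (α - t) * (α - tl) = e * (α - t) := by
          calc s * (α - t) * (α - tl) = s * (α - tl) * (α - t) := by ring
          _ = e * (α - t) := by rw [hs_e]
        have h1 : s*(α - t)*(α - tl) = (f tl - f α)*(α - t) := by
          rw [hse2, hedef]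
        have h2 : (α - tl) * (c + s*(α - t) + 3*δ/4)
            = (α - tl)*(c + 3*δ/4) + (f tl - f α)*(α - t) := by
          linear_combination h1
        have h3 : (α - tl) * f t - ((α - tl)*(c + 3*δ/4) + (f tl - f α)*(α - t))
            = ((t - α) * f tl + (α - tl) * f t - f α * (t - tl)) + (α - tl) * δ / 4 := by
          linear_combination (tl - α) * hδdef
        have h4 : 0 ≤ (t - α) * f tl + (α - tl) * f t - f α * (t - tl) := by
          linarith [hkey2]
        have h5 : 0 ≤ (α - tl) * δ / 4 :=
          div_nonneg (mul_nonneg hαtl.le hδ.le) (by norm_num)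
        have hprod : (α - tl) * (c + s*(α - t) + 3*δ/4) ≤ (α - tl) * f t := by
          rw [h2]
          linarith [h3, h4, h5]
        exact le_of_mul_le_mul_left hprod hαtl


section Helper
variable {Ω : Type*} [MeasurableSpace Ω] (P : Measure Ω) [IsProbabilityMeasure P]

lemma prob_toReal_mem_Icc (E : Set Ω) : (P E).toReal ∈ Set.Icc (0:ℝ) 1 := by
  constructor
  · exact ENNReal.toReal_nonneg
  · simpa using ENNReal.toReal_mono ENNReal.one_ne_top (prob_le_one (μ := P) (s := E))

end Helper

/-- For pairs `(P,Q)` and `(P',Q')` with tradeoff functions `τ, τ'` and hockey-stick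
curves `h, h'`: `τ ≥ τ'` pointwise on `[0,1]` iff `h ≤ h'` pointwise on `(0,∞)`. -/
theorem stmt6 {Ω Ω' : Type*} [MeasurableSpace Ω] [MeasurableSpace Ω']
    (P Q : Measure Ω) (P' Q' : Measure Ω')
    [IsProbabilityMeasure P] [IsProbabilityMeasure Q]
    [IsProbabilityMeasure P'] [IsProbabilityMeasure Q'] :
    (∀ α ∈ Set.Icc (0 : ℝ) 1, tradeoff P' Q' α ≤ tradeoff P Q α) ↔
      (∀ x > (0 : ℝ), hsDiv x P Q ≤ hsDiv x P' Q') := by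
  haveI hne : Nonempty {E : Set Ω // MeasurableSet E} := ⟨⟨∅, MeasurableSet.empty⟩⟩
  haveI hne' : Nonempty {E : Set Ω' // MeasurableSet E} := ⟨⟨∅, MeasurableSet.empty⟩⟩
  constructor
  · intro h x hx
    refine ciSup_le fun E => ?_
    obtain ⟨E, hE⟩ := E
    have hmem : (P Eᶜ).toReal ∈ Set.Icc (0:ℝ) 1 := prob_toReal_mem_Icc P Eᶜ
    calc (P E).toReal - x * (Q E).toReal
        ≤ 1 - (P Eᶜ).toReal - x * tradeoff P Q ((P Eᶜ).toReal) :=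
          event_le_one_sub P Q hx.le hE
    _ ≤ 1 - (P Eᶜ).toReal - x * tradeoff P' Q' ((P Eᶜ).toReal) := by
        have h1 := h _ hmem
        have := mul_le_mul_of_nonneg_left h1 hx.le
        linarith
    _ ≤ hsDiv x P' Q' := one_sub_le_hsDiv P' Q' hx.le hmem
  · intro h α hα
    by_contra hlt
    push_neg at hlt
    have hc0 : 0 ≤ tradeoff P Q α := tradeoff_nonneg P Q hα.1
    obtain ⟨s, hs, γ, hγ, hline⟩ := sep_line (tradeoff P' Q')
      (fun a b l m ha hb hl hm hlm => tradeoff_convex_comb P' Q' ha.1 hb.1 hl hm hlm)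
      (fun a b ha hab _ => tradeoff_antitone P' Q' ha hab)
      (fun t ht => tradeoff_nonneg P' Q' ht.1)
      (tradeoff_one P' Q')
      (fun ε hε => by
        obtain ⟨u, hu, hul⟩ := tradeoff_cont_at_zero P' Q' hε
        exact ⟨u, hu, hul⟩)
      hα hc0 hlt
    have hx : (0:ℝ) < 1/s := by positivity
    have hH := h (1/s) hx
    have h1 : 1 - α - (1/s) * tradeoff P Q α ≤ hsDiv (1/s) P Q :=
      one_sub_le_hsDiv P Q hx.le hα
    have hxs : (1/s) * s = 1 := by field_simp
    have h2 : hsDiv (1/s) P' Q' ≤ 1 - α - (1/s) * tradeoff P Q α - (1/s)*γ := by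
      refine ciSup_le fun E => ?_
      obtain ⟨E, hE⟩ := E
      have hmem : (P' Eᶜ).toReal ∈ Set.Icc (0:ℝ) 1 := prob_toReal_mem_Icc P' Eᶜ
      have hkey := event_le_one_sub P' Q' hx.le hE
      have hl := hline _ hmem
      have hmul := mul_le_mul_of_nonneg_left hl hx.le
      have hexp : (1/s) * (tradeoff P Q α + s * (α - (P' Eᶜ).toReal) + γ)
          = (1/s) * tradeoff P Q α + (α - (P' Eᶜ).toReal) + (1/s) * γ := by
        have : (1/s) * (s * (α - (P' Eᶜ).toReal)) = ((1/s) * s) * (α - (P' Eᶜ).toReal) := by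
          ring
        rw [mul_add, mul_add, this, hxs, one_mul]
      rw [hexp] at hmul
      linarith
    have h3 : 0 < (1/s) * γ := by positivity
    linarith
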